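/- Let (φ, F) : (𝒱, 𝔟) → (𝒰, 𝔞) be a subcartesian graded functor between map-graded categories, M an 𝔞-bimodule, and n a natural number. Call (φ,F) n-injective (resp. n-surjective) if the induced map 𝒩_k(F) : 𝒩_k(𝔟) → 𝒩_k(𝔞) on k-simplices of nerves is injective (resp. surjective) for every k ≤ n. Then: (1) if (φ, F) is n-injective, the map (F*)^n : C^n_𝒰(𝔞, M) → C^n_𝒱(𝔟, F*M) is surjective; (2) if (φ, F) is n-surjective, the map (F*)^n is injective. -/

import Mathlib

open CategoryTheory

universe u

namespace MapGr

variable (k : Type u) [CommRing k]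

/-- A (`k`-linear) map-graded category `(𝒰, 𝔞)`: a set `𝔞_U` of objects over every
`U ∈ 𝒰`, a `k`-module `𝔞_u(B, A)` of morphisms over every `u : U ⟶ U'` in `𝒰`, together
with associative, unital, `k`-bilinear composition maps. -/
structure GradedCat (𝒰 : Type u) [Category.{u} 𝒰] : Type (u + 1) where
  Obj : 𝒰 → Type u
  Hom : ∀ {X Y : 𝒰}, (X ⟶ Y) → Obj X → Obj Y → ModuleCat.{u} k
  comp : ∀ {X Y Z : 𝒰} {f : Y ⟶ Z} {g : X ⟶ Y} {C : Obj X} {B : Obj Y} {A : Obj Z},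
    Hom f B A → Hom g C B → Hom (g ≫ f) C A
  id : ∀ {X : 𝒰} (A : Obj X), Hom (𝟙 X) A A
  comp_add_left : ∀ {X Y Z : 𝒰} {f : Y ⟶ Z} {g : X ⟶ Y} {C : Obj X} {B : Obj Y}
    {A : Obj Z} (x x' : Hom f B A) (y : Hom g C B),
    comp (x + x') y = comp x y + comp x' y
  comp_add_right : ∀ {X Y Z : 𝒰} {f : Y ⟶ Z} {g : X ⟶ Y} {C : Obj X} {B : Obj Y}
    {A : Obj Z} (x : Hom f B A) (y y' : Hom g C B),
    comp x (y + y') = comp x y + comp x y'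
  comp_smul_left : ∀ {X Y Z : 𝒰} {f : Y ⟶ Z} {g : X ⟶ Y} {C : Obj X} {B : Obj Y}
    {A : Obj Z} (r : k) (x : Hom f B A) (y : Hom g C B),
    comp (r • x) y = r • comp x y
  comp_smul_right : ∀ {X Y Z : 𝒰} {f : Y ⟶ Z} {g : X ⟶ Y} {C : Obj X} {B : Obj Y}
    {A : Obj Z} (r : k) (x : Hom f B A) (y : Hom g C B),
    comp x (r • y) = r • comp x y
  comp_id : ∀ {X Y : 𝒰} {f : X ⟶ Y} {B : Obj X} {A : Obj Y} (x : Hom f B A),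
    HEq (comp x (id B)) x
  id_comp : ∀ {X Y : 𝒰} {f : X ⟶ Y} {B : Obj X} {A : Obj Y} (x : Hom f B A),
    HEq (comp (id A) x) x
  assoc : ∀ {W X Y Z : 𝒰} {f : Y ⟶ Z} {g : X ⟶ Y} {h : W ⟶ X} {D : Obj W} {C : Obj X}
    {B : Obj Y} {A : Obj Z} (x : Hom f B A) (y : Hom g C B) (z : Hom h D C),
    HEq (comp (comp x y) z) (comp x (comp y z))

variable {k}
variable {𝒰 : Type u} [Category.{u} 𝒰]

namespace GradedCat

variable (𝔞 : GradedCat k 𝒰)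

/-- Transport of graded morphisms along an equality of underlying morphisms of `𝒰`. -/
def Hcast {X Y : 𝒰} {f g : X ⟶ Y} (h : f = g) {B : 𝔞.Obj X} {A : 𝔞.Obj Y}
    (x : 𝔞.Hom f B A) : 𝔞.Hom g B A :=
  _root_.cast (by rw [h]) x

theorem Hcast_heq {X Y : 𝒰} {f g : X ⟶ Y} (h : f = g) {B : 𝔞.Obj X} {A : 𝔞.Obj Y}
    (x : 𝔞.Hom f B A) : HEq (𝔞.Hcast h x) x :=
  cast_heq _ _

theorem Hcast_add {X Y : 𝒰} {f g : X ⟶ Y} (h : f = g) {B : 𝔞.Obj X} {A : 𝔞.Obj Y}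
    (x y : 𝔞.Hom f B A) : 𝔞.Hcast h (x + y) = 𝔞.Hcast h x + 𝔞.Hcast h y := by
  subst h; rfl

theorem Hcast_smul {X Y : 𝒰} {f g : X ⟶ Y} (h : f = g) {B : 𝔞.Obj X} {A : 𝔞.Obj Y}
    (r : k) (x : 𝔞.Hom f B A) : 𝔞.Hcast h (r • x) = r • 𝔞.Hcast h x := by
  subst h; rfl

theorem comp_congr {X Y Z : 𝒰} {f f' : Y ⟶ Z} (hf : f = f') {g g' : X ⟶ Y} (hg : g = g')
    {C : 𝔞.Obj X} {B : 𝔞.Obj Y} {A : 𝔞.Obj Z} {x : 𝔞.Hom f B A} {x' : 𝔞.Hom f' B A}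
    (hx : HEq x x') {y : 𝔞.Hom g C B} {y' : 𝔞.Hom g' C B} (hy : HEq y y') :
    HEq (𝔞.comp x y) (𝔞.comp x' y') := by
  subst hf; subst hg; rw [eq_of_heq hx, eq_of_heq hy]

end GradedCat

variable {𝒱 : Type u} [Category.{u} 𝒱]

/-- The `𝒱`-graded category `𝔞^φ` obtained by restricting a `𝒰`-graded category `𝔞`
along a functor `φ : 𝒱 ⥤ 𝒰`:  `(𝔞^φ)_V = 𝔞_{φ V}` and `(𝔞^φ)_v(A, A') = 𝔞_{φ v}(A, A')`. -/
def GradedCat.restrict (φ : 𝒱 ⥤ 𝒰) (𝔞 : GradedCat k 𝒰) : GradedCat k 𝒱 where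
  Obj V := 𝔞.Obj (φ.obj V)
  Hom f B A := 𝔞.Hom (φ.map f) B A
  comp x y := 𝔞.Hcast (φ.map_comp _ _).symm (𝔞.comp x y)
  id A := 𝔞.Hcast (φ.map_id _).symm (𝔞.id A)
  comp_add_left x x' y := by (try dsimp only); rw [𝔞.comp_add_left, 𝔞.Hcast_add]
  comp_add_right x y y' := by (try dsimp only); rw [𝔞.comp_add_right, 𝔞.Hcast_add]
  comp_smul_left r x y := by (try dsimp only); rw [𝔞.comp_smul_left, 𝔞.Hcast_smul]
  comp_smul_right r x y := by (try dsimp only); rw [𝔞.comp_smul_right, 𝔞.Hcast_smul]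
  comp_id x :=
    ((𝔞.Hcast_heq _ _).trans
      ((𝔞.comp_congr rfl (φ.map_id _) HEq.rfl (𝔞.Hcast_heq _ _)).trans (𝔞.comp_id _)))
  id_comp x :=
    ((𝔞.Hcast_heq _ _).trans
      ((𝔞.comp_congr (φ.map_id _) rfl (𝔞.Hcast_heq _ _) HEq.rfl).trans (𝔞.id_comp _)))
  assoc x y z := by
    refine ((𝔞.Hcast_heq _ _).trans ?_).trans (𝔞.Hcast_heq _ _).symm
    refine ((𝔞.comp_congr (φ.map_comp _ _) rfl (𝔞.Hcast_heq _ _) HEq.rfl).trans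
      (𝔞.assoc _ _ _)).trans ?_
    exact 𝔞.comp_congr rfl (φ.map_comp _ _).symm HEq.rfl (𝔞.Hcast_heq _ _).symm

variable (k)

/-- A graded functor `(φ, F) : (𝒱, 𝔟) → (𝒰, 𝔞)` over a functor `φ : 𝒱 ⥤ 𝒰`: maps
`F_V : 𝔟_V → 𝔞_{φ V}` on objects and `k`-linear maps `𝔟_v(B, B') → 𝔞_{φ v}(F B, F B')`
on graded morphisms, preserving composition and identities. -/
structure GradedFunctor (φ : 𝒱 ⥤ 𝒰) (𝔟 : GradedCat k 𝒱) (𝔞 : GradedCat k 𝒰) :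
    Type u where
  obj : ∀ {V : 𝒱}, 𝔟.Obj V → 𝔞.Obj (φ.obj V)
  map : ∀ {V V' : 𝒱} (f : V ⟶ V') {B : 𝔟.Obj V} {B' : 𝔟.Obj V'},
    𝔟.Hom f B B' → 𝔞.Hom (φ.map f) (obj B) (obj B')
  map_add : ∀ {V V' : 𝒱} (f : V ⟶ V') {B : 𝔟.Obj V} {B' : 𝔟.Obj V'}
    (x y : 𝔟.Hom f B B'), map f (x + y) = map f x + map f y
  map_smul : ∀ {V V' : 𝒱} (f : V ⟶ V') {B : 𝔟.Obj V} {B' : 𝔟.Obj V'} (r : k)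
    (x : 𝔟.Hom f B B'), map f (r • x) = r • map f x
  map_id : ∀ {V : 𝒱} (B : 𝔟.Obj V), HEq (map (𝟙 V) (𝔟.id B)) (𝔞.id (obj B))
  map_comp : ∀ {V V' V'' : 𝒱} {f : V' ⟶ V''} {g : V ⟶ V'} {C : 𝔟.Obj V} {B : 𝔟.Obj V'}
    {A : 𝔟.Obj V''} (x : 𝔟.Hom f B A) (y : 𝔟.Hom g C B),
    HEq (map (g ≫ f) (𝔟.comp x y)) (𝔞.comp (map f x) (map g y))

variable {k}

namespace GradedFunctor

variable {φ : 𝒱 ⥤ 𝒰} {𝔟 : GradedCat k 𝒱} {𝔞 : GradedCat k 𝒰}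

theorem map_congr (F : GradedFunctor k φ 𝔟 𝔞) {V V' : 𝒱} {f g : V ⟶ V'} (hfg : f = g)
    {B : 𝔟.Obj V} {B' : 𝔟.Obj V'} {x : 𝔟.Hom f B B'} {y : 𝔟.Hom g B B'} (h : HEq x y) :
    HEq (F.map f x) (F.map g y) := by
  subst hfg; rw [eq_of_heq h]

/-- A graded functor is subcartesian (cartesian with respect to `Map → Mas`) iff all its
maps between graded `Hom`-modules are bijective. -/
def Subcartesian (F : GradedFunctor k φ 𝔟 𝔞) : Prop :=
  ∀ {V V' : 𝒱} (f : V ⟶ V') (B : 𝔟.Obj V) (B' : 𝔟.Obj V'),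
    Function.Bijective (fun x : 𝔟.Hom f B B' => F.map f x)

variable {𝒲 : Type u} [Category.{u} 𝒲] {ψ : 𝒲 ⥤ 𝒱} {𝔠 : GradedCat k 𝒲}

/-- Composition of graded functors. -/
def comp (F : GradedFunctor k φ 𝔟 𝔞) (G : GradedFunctor k ψ 𝔠 𝔟) :
    GradedFunctor k (ψ ⋙ φ) 𝔠 𝔞 where
  obj C := F.obj (G.obj C)
  map := fun {V V'} f {B B'} x => F.map (ψ.map f) (G.map f x)
  map_add := by intro V V' f B B' x y; (try dsimp only); rw [G.map_add, F.map_add]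
  map_smul := by intro V V' f B B' r x; (try dsimp only); rw [G.map_smul, F.map_smul]
  map_id B := (F.map_congr (ψ.map_id _) (G.map_id _)).trans (F.map_id _)
  map_comp x y := (F.map_congr (ψ.map_comp _ _) (G.map_comp _ _)).trans (F.map_comp _ _)

end GradedFunctor

/-- The canonical cartesian graded functor `δ^{φ,𝔞} : (𝒱, 𝔞^φ) → (𝒰, 𝔞)`. -/
def restrictProj (φ : 𝒱 ⥤ 𝒰) (𝔞 : GradedCat k 𝒰) :
    GradedFunctor k φ (𝔞.restrict φ) 𝔞 where
  obj A := A
  map := fun {V V'} _f {B B'} x => x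
  map_add := by intros; rfl
  map_smul := by intros; rfl
  map_id B := 𝔞.Hcast_heq (φ.map_id _).symm (𝔞.id B)
  map_comp x y := 𝔞.Hcast_heq (φ.map_comp _ _).symm (𝔞.comp x y)

theorem restrictProj_subcartesian (φ : 𝒱 ⥤ 𝒰) (𝔞 : GradedCat k 𝒰) :
    (restrictProj φ 𝔞).Subcartesian := by
  intro V V' f B B'
  constructor
  · intro a b h
    exact h
  · intro y
    exact ⟨y, rfl⟩

end MapGr

namespace MapGr

variable {k : Type u} [CommRing k]
variable {𝒰 : Type u} [Category.{u} 𝒰]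

/-- The category `𝒰^♯` associated to a `𝒰`-graded category `𝔞`: objects are pairs
`(U, A)` with `A ∈ 𝔞_U`, and morphisms `(U, A) → (U', A')` are the morphisms `U ⟶ U'`
of `𝒰`. -/
def Sh (𝔞 : GradedCat k 𝒰) : Type u := Σ X : 𝒰, 𝔞.Obj X

instance (𝔞 : GradedCat k 𝒰) : Category.{u} (Sh 𝔞) where
  Hom A B := A.1 ⟶ B.1
  id A := 𝟙 A.1
  comp f g := f ≫ g
  id_comp := by intros; simp
  comp_id := by intros; simp
  assoc := by intros; simp

/-- The underlying morphism of `𝒰` of a morphism of `𝒰^♯`. -/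
def Sh.base {𝔞 : GradedCat k 𝒰} {A B : Sh 𝔞} (f : A ⟶ B) : A.1 ⟶ B.1 := f

@[simp] theorem Sh.base_id {𝔞 : GradedCat k 𝒰} (A : Sh 𝔞) :
    Sh.base (𝟙 A) = 𝟙 A.1 := rfl

@[simp] theorem Sh.base_comp {𝔞 : GradedCat k 𝒰} {A B C : Sh 𝔞} (f : A ⟶ B) (g : B ⟶ C) :
    Sh.base (f ≫ g) = Sh.base f ≫ Sh.base g := rfl

/-- `n`-simplices of the simplicial nerve of a category with specified endpoints:
strings `X = X₀ → X₁ → ⋯ → Xₙ = Y` of `n` composable morphisms. -/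
inductive Pth (C : Type u) [Category.{u} C] : ℕ → C → C → Type u
  | nil (X : C) : Pth C 0 X X
  | cons {n : ℕ} {X Y Z : C} (f : X ⟶ Y) (p : Pth C n Y Z) : Pth C (n + 1) X Z

/-- The composite `|u| = uₙ₋₁ ⋯ u₁ u₀` of a string of composable morphisms. -/
def Pth.comp {C : Type u} [Category.{u} C] : ∀ {n : ℕ} {X Y : C}, Pth C n X Y → (X ⟶ Y)
  | _, _, _, .nil X => 𝟙 X
  | _, _, _, .cons f p => f ≫ p.comp

@[simp] theorem Pth.comp_nil {C : Type u} [Category.{u} C] (X : C) :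
    (Pth.nil X).comp = 𝟙 X := rfl

@[simp] theorem Pth.comp_cons {C : Type u} [Category.{u} C] {n : ℕ} {X Y Z : C}
    (f : X ⟶ Y) (p : Pth C n Y Z) : (Pth.cons f p).comp = f ≫ p.comp := rfl

/-- The map induced by a functor on simplices of the nerves. -/
def Pth.map {C D : Type u} [Category.{u} C] [Category.{u} D] (F : C ⥤ D) :
    ∀ {n : ℕ} {X Y : C}, Pth C n X Y → Pth D n (F.obj X) (F.obj Y)
  | _, _, _, .nil X => .nil _
  | _, _, _, .cons f p => .cons (F.map f) (p.map F)

theorem Pth.comp_map {C D : Type u} [Category.{u} C] [Category.{u} D] (F : C ⥤ D)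
    {n : ℕ} {X Y : C} (p : Pth C n X Y) : (p.map F).comp = F.map p.comp := by
  induction p with
  | nil => simp [Pth.map]
  | cons f p ih => simp [Pth.map, ih]

/-- The set of `n`-simplices of the nerve `𝒩(𝔞) = 𝒩(𝒰^♯)` of a graded category. -/
def NerveTot (C : Type u) [Category.{u} C] (m : ℕ) : Type u :=
  Σ (X : C) (Y : C), Pth C m X Y

/-- The map induced by a functor on the set of `n`-simplices of the nerves. -/
def NerveTot.map {C D : Type u} [Category.{u} C] [Category.{u} D] (F : C ⥤ D) {m : ℕ}
    (s : NerveTot C m) : NerveTot D m :=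
  ⟨F.obj s.1, F.obj s.2.1, Pth.map F s.2.2⟩

/-- A family of elements of the graded `Hom`-modules of `𝔞` lying over a simplex of the
nerve of `𝔞`. -/
inductive PthElts {k : Type u} [CommRing k] {𝒰 : Type u} [Category.{u} 𝒰]
    (𝔞 : GradedCat k 𝒰) : ∀ {n : ℕ} {X Y : Sh 𝔞}, Pth (Sh 𝔞) n X Y → Type u
  | nil (X : Sh 𝔞) : PthElts 𝔞 (Pth.nil X)
  | cons {n : ℕ} {X Y Z : Sh 𝔞} {f : X ⟶ Y} {p : Pth (Sh 𝔞) n Y Z}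
      (x : 𝔞.Hom (Sh.base f) X.2 Y.2) (e : PthElts 𝔞 p) : PthElts 𝔞 (Pth.cons f p)

variable (k)

/-- An `𝔞`-bimodule `M`: `k`-modules `M_u(B, A)` together with associative, unital,
`k`-bilinear left and right actions of `𝔞`. -/
structure Bimod {𝒰 : Type u} [Category.{u} 𝒰] (𝔞 : GradedCat k 𝒰) : Type (u + 1) where
  M : ∀ {X Y : 𝒰}, (X ⟶ Y) → 𝔞.Obj X → 𝔞.Obj Y → ModuleCat.{u} k
  actL : ∀ {X Y Z : 𝒰} {f : Y ⟶ Z} {g : X ⟶ Y} {B : 𝔞.Obj X} {A : 𝔞.Obj Y}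
    {A' : 𝔞.Obj Z}, 𝔞.Hom f A A' → M g B A → M (g ≫ f) B A'
  actR : ∀ {X Y Z : 𝒰} {f : Y ⟶ Z} {g : X ⟶ Y} {B' : 𝔞.Obj X} {B : 𝔞.Obj Y}
    {A : 𝔞.Obj Z}, M f B A → 𝔞.Hom g B' B → M (g ≫ f) B' A
  actL_add_left : ∀ {X Y Z : 𝒰} {f : Y ⟶ Z} {g : X ⟶ Y} {B : 𝔞.Obj X} {A : 𝔞.Obj Y}
    {A' : 𝔞.Obj Z} (x x' : 𝔞.Hom f A A') (m : M g B A),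
    actL (x + x') m = actL x m + actL x' m
  actL_add_right : ∀ {X Y Z : 𝒰} {f : Y ⟶ Z} {g : X ⟶ Y} {B : 𝔞.Obj X} {A : 𝔞.Obj Y}
    {A' : 𝔞.Obj Z} (x : 𝔞.Hom f A A') (m m' : M g B A),
    actL x (m + m') = actL x m + actL x m'
  actL_smul_left : ∀ {X Y Z : 𝒰} {f : Y ⟶ Z} {g : X ⟶ Y} {B : 𝔞.Obj X} {A : 𝔞.Obj Y}
    {A' : 𝔞.Obj Z} (r : k) (x : 𝔞.Hom f A A') (m : M g B A),
    actL (r • x) m = r • actL x m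
  actL_smul_right : ∀ {X Y Z : 𝒰} {f : Y ⟶ Z} {g : X ⟶ Y} {B : 𝔞.Obj X} {A : 𝔞.Obj Y}
    {A' : 𝔞.Obj Z} (r : k) (x : 𝔞.Hom f A A') (m : M g B A),
    actL x (r • m) = r • actL x m
  actR_add_left : ∀ {X Y Z : 𝒰} {f : Y ⟶ Z} {g : X ⟶ Y} {B' : 𝔞.Obj X} {B : 𝔞.Obj Y}
    {A : 𝔞.Obj Z} (m m' : M f B A) (y : 𝔞.Hom g B' B),
    actR (m + m') y = actR m y + actR m' y
  actR_add_right : ∀ {X Y Z : 𝒰} {f : Y ⟶ Z} {g : X ⟶ Y} {B' : 𝔞.Obj X} {B : 𝔞.Obj Y}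
    {A : 𝔞.Obj Z} (m : M f B A) (y y' : 𝔞.Hom g B' B),
    actR m (y + y') = actR m y + actR m y'
  actR_smul_left : ∀ {X Y Z : 𝒰} {f : Y ⟶ Z} {g : X ⟶ Y} {B' : 𝔞.Obj X} {B : 𝔞.Obj Y}
    {A : 𝔞.Obj Z} (r : k) (m : M f B A) (y : 𝔞.Hom g B' B),
    actR (r • m) y = r • actR m y
  actR_smul_right : ∀ {X Y Z : 𝒰} {f : Y ⟶ Z} {g : X ⟶ Y} {B' : 𝔞.Obj X} {B : 𝔞.Obj Y}
    {A : 𝔞.Obj Z} (r : k) (m : M f B A) (y : 𝔞.Hom g B' B),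
    actR m (r • y) = r • actR m y
  actL_id : ∀ {X Y : 𝒰} {g : X ⟶ Y} {B : 𝔞.Obj X} {A : 𝔞.Obj Y} (m : M g B A),
    HEq (actL (𝔞.id A) m) m
  actR_id : ∀ {X Y : 𝒰} {f : X ⟶ Y} {B : 𝔞.Obj X} {A : 𝔞.Obj Y} (m : M f B A),
    HEq (actR m (𝔞.id B)) m
  actL_actL : ∀ {W X Y Z : 𝒰} {f' : Y ⟶ Z} {f : X ⟶ Y} {g : W ⟶ X} {B : 𝔞.Obj W}
    {A : 𝔞.Obj X} {A' : 𝔞.Obj Y} {A'' : 𝔞.Obj Z} (x : 𝔞.Hom f' A' A'')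
    (y : 𝔞.Hom f A A') (m : M g B A),
    HEq (actL x (actL y m)) (actL (𝔞.comp x y) m)
  actR_actR : ∀ {W X Y Z : 𝒰} {f : Y ⟶ Z} {g : X ⟶ Y} {h : W ⟶ X} {B'' : 𝔞.Obj W}
    {B' : 𝔞.Obj X} {B : 𝔞.Obj Y} {A : 𝔞.Obj Z} (m : M f B A) (y : 𝔞.Hom g B' B)
    (y' : 𝔞.Hom h B'' B'),
    HEq (actR (actR m y) y') (actR m (𝔞.comp y y'))
  actL_actR : ∀ {W X Y Z : 𝒰} {f : Y ⟶ Z} {g : X ⟶ Y} {h : W ⟶ X} {B' : 𝔞.Obj W}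
    {B : 𝔞.Obj X} {A : 𝔞.Obj Y} {A' : 𝔞.Obj Z} (x : 𝔞.Hom f A A') (m : M g B A)
    (y : 𝔞.Hom h B' B),
    HEq (actL x (actR m y)) (actR (actL x m) y)

variable {k}

namespace Bimod

variable {𝔞 : GradedCat k 𝒰} (M : Bimod k 𝔞)

/-- Transport of bimodule elements along an equality of underlying morphisms of `𝒰`. -/
def cst {X Y : 𝒰} {f g : X ⟶ Y} (h : f = g) {B : 𝔞.Obj X} {A : 𝔞.Obj Y}
    (m : M.M f B A) : M.M g B A :=
  _root_.cast (by rw [h]) m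

theorem cst_heq {X Y : 𝒰} {f g : X ⟶ Y} (h : f = g) {B : 𝔞.Obj X} {A : 𝔞.Obj Y}
    (m : M.M f B A) : HEq (M.cst h m) m :=
  cast_heq _ _

theorem cst_add {X Y : 𝒰} {f g : X ⟶ Y} (h : f = g) {B : 𝔞.Obj X} {A : 𝔞.Obj Y}
    (m m' : M.M f B A) : M.cst h (m + m') = M.cst h m + M.cst h m' := by
  subst h; rfl

theorem cst_smul {X Y : 𝒰} {f g : X ⟶ Y} (h : f = g) {B : 𝔞.Obj X} {A : 𝔞.Obj Y}
    (r : k) (m : M.M f B A) : M.cst h (r • m) = r • M.cst h m := by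
  subst h; rfl

theorem actL_congr {X Y Z : 𝒰} {f f' : Y ⟶ Z} (hf : f = f') {g g' : X ⟶ Y}
    (hg : g = g') {B : 𝔞.Obj X} {A : 𝔞.Obj Y} {A' : 𝔞.Obj Z} {x : 𝔞.Hom f A A'}
    {x' : 𝔞.Hom f' A A'} (hx : HEq x x') {m : M.M g B A} {m' : M.M g' B A}
    (hm : HEq m m') : HEq (M.actL x m) (M.actL x' m') := by
  subst hf; subst hg; rw [eq_of_heq hx, eq_of_heq hm]

theorem actR_congr {X Y Z : 𝒰} {f f' : Y ⟶ Z} (hf : f = f') {g g' : X ⟶ Y}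
    (hg : g = g') {B' : 𝔞.Obj X} {B : 𝔞.Obj Y} {A : 𝔞.Obj Z} {m : M.M f B A}
    {m' : M.M f' B A} (hm : HEq m m') {y : 𝔞.Hom g B' B} {y' : 𝔞.Hom g' B' B}
    (hy : HEq y y') : HEq (M.actR m y) (M.actR m' y') := by
  subst hf; subst hg; rw [eq_of_heq hm, eq_of_heq hy]

end Bimod

/-- The identity bimodule `1_𝔞`. -/
def GradedCat.unit (𝔞 : GradedCat k 𝒰) : Bimod k 𝔞 where
  M := 𝔞.Hom
  actL := 𝔞.comp
  actR := 𝔞.comp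
  actL_add_left := 𝔞.comp_add_left
  actL_add_right := 𝔞.comp_add_right
  actL_smul_left := 𝔞.comp_smul_left
  actL_smul_right := 𝔞.comp_smul_right
  actR_add_left := 𝔞.comp_add_left
  actR_add_right := 𝔞.comp_add_right
  actR_smul_left := 𝔞.comp_smul_left
  actR_smul_right := 𝔞.comp_smul_right
  actL_id := 𝔞.id_comp
  actR_id := 𝔞.comp_id
  actL_actL x y m := (𝔞.assoc x y m).symm
  actR_actR m y y' := 𝔞.assoc m y y'
  actL_actR x m y := (𝔞.assoc x m y).symm

variable {𝒱 : Type u} [Category.{u} 𝒱]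

/-- The pullback `F*M` of an `𝔞`-bimodule along a graded functor
`(φ, F) : (𝒱, 𝔟) → (𝒰, 𝔞)`: `(F*M)_v(B, B') = M_{φ v}(F B, F B')`. -/
def Bimod.pullback {φ : 𝒱 ⥤ 𝒰} {𝔟 : GradedCat k 𝒱} {𝔞 : GradedCat k 𝒰}
    (F : GradedFunctor k φ 𝔟 𝔞) (M : Bimod k 𝔞) : Bimod k 𝔟 where
  M f B B' := M.M (φ.map f) (F.obj B) (F.obj B')
  actL := fun {X Y Z f g B A A'} x m =>
    M.cst (φ.map_comp g f).symm (M.actL (F.map f x) m)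
  actR := fun {X Y Z f g B' B A} m y =>
    M.cst (φ.map_comp g f).symm (M.actR m (F.map g y))
  actL_add_left := by
    intros; (try dsimp only); rw [F.map_add, M.actL_add_left, M.cst_add]
  actL_add_right := by
    intros; (try dsimp only); rw [M.actL_add_right, M.cst_add]
  actL_smul_left := by
    intros; (try dsimp only); rw [F.map_smul, M.actL_smul_left, M.cst_smul]
  actL_smul_right := by
    intros; (try dsimp only); rw [M.actL_smul_right, M.cst_smul]
  actR_add_left := by
    intros; (try dsimp only); rw [M.actR_add_left, M.cst_add]
  actR_add_right := by
    intros; (try dsimp only); rw [F.map_add, M.actR_add_right, M.cst_add]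
  actR_smul_left := by
    intros; (try dsimp only); rw [M.actR_smul_left, M.cst_smul]
  actR_smul_right := by
    intros; (try dsimp only); rw [F.map_smul, M.actR_smul_right, M.cst_smul]
  actL_id := by
    intro X Y g B A m; try dsimp only
    exact (M.cst_heq _ _).trans
      ((M.actL_congr (φ.map_id _) rfl (F.map_id _) HEq.rfl).trans (M.actL_id m))
  actR_id := by
    intro X Y f B A m; try dsimp only
    exact (M.cst_heq _ _).trans
      ((M.actR_congr rfl (φ.map_id _) HEq.rfl (F.map_id _)).trans (M.actR_id m))
  actL_actL := by
    intro W X Y Z f' f g B A A' A'' x y m; try dsimp only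
    refine ((M.cst_heq _ _).trans ?_).trans (M.cst_heq _ _).symm
    refine ((M.actL_congr rfl (φ.map_comp _ _) HEq.rfl (M.cst_heq _ _)).trans
      (M.actL_actL _ _ _)).trans ?_
    exact M.actL_congr (φ.map_comp _ _).symm rfl (F.map_comp _ _).symm HEq.rfl
  actR_actR := by
    intro W X Y Z f g h B'' B' B A m y y'; try dsimp only
    refine ((M.cst_heq _ _).trans ?_).trans (M.cst_heq _ _).symm
    refine ((M.actR_congr (φ.map_comp _ _) rfl (M.cst_heq _ _) HEq.rfl).trans
      (M.actR_actR _ _ _)).trans ?_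
    exact M.actR_congr rfl (φ.map_comp _ _).symm HEq.rfl (F.map_comp _ _).symm
  actL_actR := by
    intro W X Y Z f g h B' B A A' x m y; try dsimp only
    refine ((M.cst_heq _ _).trans ?_).trans (M.cst_heq _ _).symm
    refine ((M.actL_congr rfl (φ.map_comp _ _) HEq.rfl (M.cst_heq _ _)).trans
      (M.actL_actR _ _ _)).trans ?_
    exact M.actR_congr (φ.map_comp _ _).symm rfl (M.cst_heq _ _).symm HEq.rfl

/-- The functor `𝒱^♯ ⥤ 𝒰^♯` induced by a graded functor. -/
def sharpF {φ : 𝒱 ⥤ 𝒰} {𝔟 : GradedCat k 𝒱} {𝔞 : GradedCat k 𝒰}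
    (F : GradedFunctor k φ 𝔟 𝔞) : Sh 𝔟 ⥤ Sh 𝔞 where
  obj X := ⟨φ.obj X.1, F.obj X.2⟩
  map {X Y} f := φ.map (Sh.base f)
  map_id X := φ.map_id X.1
  map_comp f g := φ.map_comp _ _

/-- The map induced by a graded functor on families of elements over simplices. -/
def eltsMap {φ : 𝒱 ⥤ 𝒰} {𝔟 : GradedCat k 𝒱} {𝔞 : GradedCat k 𝒰}
    (F : GradedFunctor k φ 𝔟 𝔞) :
    ∀ {n : ℕ} {X Y : Sh 𝔟} {p : Pth (Sh 𝔟) n X Y},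
      PthElts 𝔟 p → PthElts 𝔞 (p.map (sharpF F))
  | _, _, _, _, .nil X => .nil _
  | _, _, _, _, .cons x e => .cons (F.map _ x) (eltsMap F e)

/-- The module of raw Hochschild `n`-cochains of `(𝒰, 𝔞)` with values in an
`𝔞`-bimodule `M`: families, indexed by the `n`-simplices `(u, A)` of `𝒩(𝔞)`, of maps
`𝔞_{u_{n-1}} ⊗ ⋯ ⊗ 𝔞_{u_0} → M_{|u|}(A₀, Aₙ)` (multilinearity is the separate
predicate `IsCochain`). -/
abbrev RawCochain {𝔞 : GradedCat k 𝒰} (M : Bimod k 𝔞) (n : ℕ) : Type u :=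
  ∀ (X Y : Sh 𝔞) (p : Pth (Sh 𝔞) n X Y), PthElts 𝔞 p → M.M (Sh.base p.comp) X.2 Y.2

/-- Restriction of Hochschild cochains along a graded functor, with values in the
pullback bimodule: `(F*ψ)_{(v,B)} = ψ_{(φ v, F B)} ∘ F^{⊗n}`. -/
def Fstar {φ : 𝒱 ⥤ 𝒰} {𝔟 : GradedCat k 𝒱} {𝔞 : GradedCat k 𝒰}
    (F : GradedFunctor k φ 𝔟 𝔞) (M : Bimod k 𝔞) {n : ℕ} (c : RawCochain M n) :
    RawCochain (Bimod.pullback F M) n :=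
  fun X Y p e =>
    M.cst (by rw [Pth.comp_map]; rfl) (c _ _ (p.map (sharpF F)) (eltsMap F e))

/-- Restriction of Hochschild cochains (with values in the identity bimodules) along a
subcartesian graded functor: `(F*ψ)_{(v,B)} = F⁻¹ ∘ ψ_{(φ v, F B)} ∘ F^{⊗n}`. -/
noncomputable def FstarUnit {φ : 𝒱 ⥤ 𝒰} {𝔟 : GradedCat k 𝒱} {𝔞 : GradedCat k 𝒰}
    (F : GradedFunctor k φ 𝔟 𝔞) (hF : F.Subcartesian) {n : ℕ}
    (c : RawCochain 𝔞.unit n) : RawCochain 𝔟.unit n :=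
  fun X Y p e =>
    (Equiv.ofBijective _ (hF (Sh.base p.comp) X.2 Y.2)).symm
      ((𝔞.unit).cst (by rw [Pth.comp_map]; rfl) (c _ _ (p.map (sharpF F)) (eltsMap F e)))

section Multilinear

variable {𝔞 : GradedCat k 𝒰} (M : Bimod k 𝔞)

/-- The multilinearity predicate for (relative) Hochschild cochains: additivity and
`k`-homogeneity in the first slot, and, recursively, multilinearity of all partial
evaluations. -/
def IsML : ∀ {n : ℕ} {W : 𝒰} {B : 𝔞.Obj W} {Y : Sh 𝔞} {v : W ⟶ Y.1},
    (∀ (Z : Sh 𝔞) (q : Pth (Sh 𝔞) n Y Z), PthElts 𝔞 q →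
      M.M (v ≫ Sh.base q.comp) B Z.2) → Prop
  | 0, _, _, _, _, _ => True
  | n + 1, W, B, Y, v, c =>
      (∀ (Y' Z : Sh 𝔞) (a : Y ⟶ Y') (q : Pth (Sh 𝔞) n Y' Z) (e : PthElts 𝔞 q)
        (x x' : 𝔞.Hom (Sh.base a) Y.2 Y'.2),
        c Z (.cons a q) (.cons (x + x') e) =
          c Z (.cons a q) (.cons x e) + c Z (.cons a q) (.cons x' e)) ∧
      (∀ (Y' Z : Sh 𝔞) (a : Y ⟶ Y') (q : Pth (Sh 𝔞) n Y' Z) (e : PthElts 𝔞 q) (r : k)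
        (x : 𝔞.Hom (Sh.base a) Y.2 Y'.2),
        c Z (.cons a q) (.cons (r • x) e) = r • c Z (.cons a q) (.cons x e)) ∧
      (∀ (Y' : Sh 𝔞) (a : Y ⟶ Y') (x : 𝔞.Hom (Sh.base a) Y.2 Y'.2),
        IsML (v := v ≫ Sh.base a)
          (fun Z q e => M.cst (by simp) (c Z (.cons a q) (.cons x e))))

/-- A raw cochain, viewed as a relative cochain. -/
def toRel {n : ℕ} (c : RawCochain M n) (X : Sh 𝔞) :
    ∀ (Z : Sh 𝔞) (q : Pth (Sh 𝔞) n X Z), PthElts 𝔞 q →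
      M.M (𝟙 X.1 ≫ Sh.base q.comp) X.2 Z.2 :=
  fun Z q e => M.cst (by simp) (c X Z q e)

/-- A raw cochain is a genuine Hochschild cochain if it is multilinear. -/
def IsCochain {n : ℕ} (c : RawCochain M n) : Prop :=
  ∀ X : Sh 𝔞, IsML M (toRel M c X)

end Multilinear

section Differential

variable {𝔞 : GradedCat k 𝒰}

/-- The inductive core of the Hochschild differential: `χ` is the relative cochain with
the already-consumed prefix applied, and `G` records the evaluation with the last
morphism of the prefix composed into the first remaining slot (initially, the right
action on the source). -/
def hochD (M : Bimod k 𝔞) {W : 𝒰} (B : 𝔞.Obj W) :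
    ∀ {m : ℕ} {Y Z : Sh 𝔞} (v : W ⟶ Y.1)
      (χ : ∀ (Z' : Sh 𝔞) (q : Pth (Sh 𝔞) m Y Z'), PthElts 𝔞 q →
        M.M (v ≫ Sh.base q.comp) B Z'.2)
      (G : ∀ (Y' Z' : Sh 𝔞) (c : Y ⟶ Y') (z : 𝔞.Hom (Sh.base c) Y.2 Y'.2)
        (q : Pth (Sh 𝔞) m Y' Z'), PthElts 𝔞 q →
        M.M (v ≫ (Sh.base c ≫ Sh.base q.comp)) B Z'.2)
      (p : Pth (Sh 𝔞) (m + 1) Y Z) (e : PthElts 𝔞 p),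
      M.M (v ≫ Sh.base p.comp) B Z.2
  | 0, Y, Z, v, χ, G, .cons a (.nil _), .cons x e' =>
      G _ _ a x (.nil _) e' - M.cst (by simp) (M.actL x (χ _ (.nil _) (.nil _)))
  | m + 1, Y, Z, v, χ, G, .cons a q, .cons x e' =>
      G _ _ a x q e' -
        M.cst (by simp)
          (hochD M B (v ≫ Sh.base a)
            (fun Z' r er => M.cst (by simp) (χ Z' (.cons a r) (.cons x er)))
            (fun Y'' Z' c z r er =>
              M.cst (by simp) (χ Z' (.cons (a ≫ c) r) (.cons (𝔞.comp z x) er)))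
            q e')

/-- The simplicial Hochschild differential on raw cochains. -/
def dRaw (M : Bimod k 𝔞) {n : ℕ} (c : RawCochain M n) : RawCochain M (n + 1) :=
  fun X Z p e =>
    M.cst (by simp)
      (hochD M X.2 (𝟙 X.1)
        (fun Z' q eq => M.cst (by simp) (c X Z' q eq))
        (fun Y' Z' a z q eq => M.cst (by simp) (M.actR (c Y' Z' q eq) z))
        p e)

end Differential

end MapGr

namespace MapGr

section Aux

variable {k : Type u} [CommRing k] {𝒱 𝒰 : Type u} [Category.{u} 𝒱]
    [Category.{u} 𝒰] {φ : 𝒱 ⥤ 𝒰} {𝔟 : GradedCat k 𝒱} {𝔞 : GradedCat k 𝒰}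

/-- Inverse of the hom-module maps of a subcartesian graded functor. -/
noncomputable def Finv (F : GradedFunctor k φ 𝔟 𝔞) (hF : F.Subcartesian)
    {V V' : 𝒱} (f : V ⟶ V') {B : 𝔟.Obj V} {B' : 𝔟.Obj V'}
    (x : 𝔞.Hom (φ.map f) (F.obj B) (F.obj B')) : 𝔟.Hom f B B' :=
  (Equiv.ofBijective _ (hF f B B')).symm x

theorem Fmap_Finv (F : GradedFunctor k φ 𝔟 𝔞) (hF : F.Subcartesian)
    {V V' : 𝒱} (f : V ⟶ V') {B : 𝔟.Obj V} {B' : 𝔟.Obj V'}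
    (x : 𝔞.Hom (φ.map f) (F.obj B) (F.obj B')) :
    F.map f (Finv F hF f x) = x :=
  (Equiv.ofBijective _ (hF f B B')).apply_symm_apply x

theorem Finv_Fmap (F : GradedFunctor k φ 𝔟 𝔞) (hF : F.Subcartesian)
    {V V' : 𝒱} (f : V ⟶ V') {B : 𝔟.Obj V} {B' : 𝔟.Obj V'}
    (x : 𝔟.Hom f B B') : Finv F hF f (F.map f x) = x :=
  (Equiv.ofBijective _ (hF f B B')).symm_apply_apply x

theorem Finv_add (F : GradedFunctor k φ 𝔟 𝔞) (hF : F.Subcartesian)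
    {V V' : 𝒱} (f : V ⟶ V') {B : 𝔟.Obj V} {B' : 𝔟.Obj V'}
    (x y : 𝔞.Hom (φ.map f) (F.obj B) (F.obj B')) :
    Finv F hF f (x + y) = Finv F hF f x + Finv F hF f y := by
  apply (hF f B B').1
  show F.map f _ = F.map f _
  rw [F.map_add, Fmap_Finv, Fmap_Finv, Fmap_Finv]

theorem Finv_smul (F : GradedFunctor k φ 𝔟 𝔞) (hF : F.Subcartesian)
    {V V' : 𝒱} (f : V ⟶ V') {B : 𝔟.Obj V} {B' : 𝔟.Obj V'} (r : k)
    (x : 𝔞.Hom (φ.map f) (F.obj B) (F.obj B')) :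
    Finv F hF f (r • x) = r • Finv F hF f x := by
  apply (hF f B B').1
  show F.map f _ = F.map f _
  rw [F.map_smul, Fmap_Finv, Fmap_Finv]

theorem PthEltsEtaNil {k : Type u} [CommRing k] {𝒰 : Type u} [Category.{u} 𝒰]
    {𝔞 : GradedCat k 𝒰} {X : Sh 𝔞} (e : PthElts 𝔞 (Pth.nil X)) :
    e = PthElts.nil X :=
  match e with | .nil _ => rfl

theorem PthEltsEta {k : Type u} [CommRing k] {𝒰 : Type u} [Category.{u} 𝒰]
    {𝔞 : GradedCat k 𝒰} {m : ℕ} {X Y Z : Sh 𝔞} {f : X ⟶ Y} {p : Pth (Sh 𝔞) m Y Z}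
    (e : PthElts 𝔞 (Pth.cons f p)) :
    ∃ (x : 𝔞.Hom (Sh.base f) X.2 Y.2) (e' : PthElts 𝔞 p), e = PthElts.cons x e' :=
  match e with | .cons x e' => ⟨x, e', rfl⟩

/-- Head of a family of elements over a `cons` path. -/
def eltsHead {𝔞 : GradedCat k 𝒰} {m : ℕ} {X Y Z : Sh 𝔞} {f : X ⟶ Y}
    {p : Pth (Sh 𝔞) m Y Z} (e : PthElts 𝔞 (Pth.cons f p)) :
    𝔞.Hom (Sh.base f) X.2 Y.2 :=
  match e with | .cons x _ => x

/-- Tail of a family of elements over a `cons` path. -/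
def eltsTail {𝔞 : GradedCat k 𝒰} {m : ℕ} {X Y Z : Sh 𝔞} {f : X ⟶ Y}
    {p : Pth (Sh 𝔞) m Y Z} (e : PthElts 𝔞 (Pth.cons f p)) : PthElts 𝔞 p :=
  match e with | .cons _ e' => e'

/-- Inverse of `eltsMap` for a subcartesian graded functor. -/
noncomputable def eltsInv (F : GradedFunctor k φ 𝔟 𝔞) (hF : F.Subcartesian) :
    ∀ {m : ℕ} {X Y : Sh 𝔟} (p : Pth (Sh 𝔟) m X Y),
      PthElts 𝔞 (p.map (sharpF F)) → PthElts 𝔟 p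
  | _, _, _, .nil X => fun _ => .nil X
  | _, _, _, .cons f p => fun e =>
      .cons (Finv F hF (Sh.base f) (eltsHead e)) (eltsInv F hF p (eltsTail e))

theorem eltsMap_eltsInv (F : GradedFunctor k φ 𝔟 𝔞) (hF : F.Subcartesian)
    {m : ℕ} {X Y : Sh 𝔟} (p : Pth (Sh 𝔟) m X Y)
    (e : PthElts 𝔞 (p.map (sharpF F))) : eltsMap F (eltsInv F hF p e) = e := by
  induction p with
  | nil X => rw [PthEltsEtaNil e]; rfl
  | cons f p ih =>
    obtain ⟨x, e', rfl⟩ := PthEltsEta e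
    exact congrArg₂ (fun a b => PthElts.cons a b) (Fmap_Finv F hF (Sh.base f) x) (ih e')

theorem eltsInv_eltsMap (F : GradedFunctor k φ 𝔟 𝔞) (hF : F.Subcartesian)
    {m : ℕ} {X Y : Sh 𝔟} (p : Pth (Sh 𝔟) m X Y)
    (e : PthElts 𝔟 p) : eltsInv F hF p (eltsMap F e) = e := by
  induction e with
  | nil X => rfl
  | @cons m X Y Z f p x e ih =>
    show PthElts.cons (Finv F hF _ (F.map _ x)) (eltsInv F hF p (eltsMap F e)) = _
    rw [Finv_Fmap, ih]

theorem Bimod.cst_zero {𝔞 : GradedCat k 𝒰} (M : Bimod k 𝔞) {X Y : 𝒰} {f g : X ⟶ Y}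
    (h : f = g) {B : 𝔞.Obj X} {A : 𝔞.Obj Y} : M.cst h (0 : M.M f B A) = 0 := by
  subst h; rfl

theorem Bimod.cst_inj {𝔞 : GradedCat k 𝒰} (M : Bimod k 𝔞) {X Y : 𝒰} {f g : X ⟶ Y}
    (h : f = g) {B : 𝔞.Obj X} {A : 𝔞.Obj Y} {m m' : M.M f B A}
    (hmm : M.cst h m = M.cst h m') : m = m' := by
  subst h; exact hmm

/-- A pointwise-zero relative cochain is multilinear. -/
theorem IsML_zero {𝔞 : GradedCat k 𝒰} (M : Bimod k 𝔞) :
    ∀ {m : ℕ} {W : 𝒰} {B : 𝔞.Obj W} {Y : Sh 𝔞} {v : W ⟶ Y.1}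
      (χ : ∀ (Z : Sh 𝔞) (q : Pth (Sh 𝔞) m Y Z), PthElts 𝔞 q →
        M.M (v ≫ Sh.base q.comp) B Z.2),
      (∀ Z q e, χ Z q e = 0) → IsML M χ := by
  intro m
  induction m with
  | zero => intro _ _ _ _ _ _; trivial
  | succ m ih =>
    intro W B Y v χ h
    refine ⟨?_, ?_, ?_⟩
    · intro Y' Z a q e x x'; rw [h, h, h, add_zero]
    · intro Y' Z a q e r x; rw [h, h, smul_zero]
    · intro Y' a x
      exact ih _ (fun Z q e => by rw [h]; exact M.cst_zero _)


theorem nerveTotEqElim {C : Type u} [Category.{u} C] {m : ℕ}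
    {t t' : NerveTot C m} (h : t = t') :
    ∃ (_ : t.1 = t'.1) (_ : t.2.1 = t'.2.1), HEq t.2.2 t'.2.2 := by
  subst h; exact ⟨rfl, rfl, HEq.rfl⟩

/-- The type of values of a raw cochain at a given simplex of the nerve. -/
def valT {𝔞 : GradedCat k 𝒰} (M : Bimod k 𝔞) {m : ℕ} (t : NerveTot (Sh 𝔞) m) :
    Type u :=
  PthElts 𝔞 t.2.2 → M.M (Sh.base t.2.2.comp) t.1.2 t.2.1.2

theorem map_base_comp (F : GradedFunctor k φ 𝔟 𝔞) {m : ℕ} {X Y : Sh 𝔟}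
    (q : Pth (Sh 𝔟) m X Y) :
    φ.map (Sh.base q.comp) = Sh.base ((Pth.map (sharpF F) q).comp) := by
  rw [Pth.comp_map]; rfl

/-- The candidate value of a lift of a cochain at an image simplex. -/
noncomputable def valF (F : GradedFunctor k φ 𝔟 𝔞) (hF : F.Subcartesian)
    (M : Bimod k 𝔞) {n : ℕ} (c' : RawCochain (Bimod.pullback F M) n)
    (s : NerveTot (Sh 𝔟) n) : valT M (NerveTot.map (sharpF F) s) :=
  fun e => M.cst (map_base_comp F s.2.2)
    (c' s.1 s.2.1 s.2.2 (eltsInv F hF s.2.2 e))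

open Classical in
/-- The lift along `(F*)ⁿ` of a raw cochain. -/
noncomputable def cLift (F : GradedFunctor k φ 𝔟 𝔞) (hF : F.Subcartesian)
    (M : Bimod k 𝔞) {n : ℕ} (c' : RawCochain (Bimod.pullback F M) n) :
    RawCochain M n :=
  fun X Z p e =>
    if h : ∃ s : NerveTot (Sh 𝔟) n, NerveTot.map (sharpF F) s = ⟨X, Z, p⟩ then
      _root_.cast (congrArg (valT M) h.choose_spec) (valF F hF M c' h.choose) e
    else 0

theorem cLift_zero (F : GradedFunctor k φ 𝔟 𝔞) (hF : F.Subcartesian)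
    (M : Bimod k 𝔞) {n : ℕ} (c' : RawCochain (Bimod.pullback F M) n)
    (X Z : Sh 𝔞) (p : Pth (Sh 𝔞) n X Z) (e : PthElts 𝔞 p)
    (h : ¬ ∃ s : NerveTot (Sh 𝔟) n, NerveTot.map (sharpF F) s = ⟨X, Z, p⟩) :
    cLift F hF M c' X Z p e = 0 := by
  unfold cLift
  rw [dif_neg h]

theorem cLift_heq (F : GradedFunctor k φ 𝔟 𝔞) (hF : F.Subcartesian)
    (M : Bimod k 𝔞) {n : ℕ} (c' : RawCochain (Bimod.pullback F M) n)
    (hinj : Function.Injective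
      (fun s : NerveTot (Sh 𝔟) n => NerveTot.map (sharpF F) s))
    (s₀ : NerveTot (Sh 𝔟) n) (e : PthElts 𝔞 (s₀.2.2.map (sharpF F))) :
    HEq (cLift F hF M c' ((sharpF F).obj s₀.1) ((sharpF F).obj s₀.2.1)
        (s₀.2.2.map (sharpF F)) e)
      (c' s₀.1 s₀.2.1 s₀.2.2 (eltsInv F hF s₀.2.2 e)) := by
  have hc : ∃ s : NerveTot (Sh 𝔟) n, NerveTot.map (sharpF F) s =
      (⟨(sharpF F).obj s₀.1, (sharpF F).obj s₀.2.1,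
        s₀.2.2.map (sharpF F)⟩ : NerveTot (Sh 𝔞) n) := ⟨s₀, rfl⟩
  have key : ∀ (s₁ : NerveTot (Sh 𝔟) n)
      (hs₁ : NerveTot.map (sharpF F) s₁ = NerveTot.map (sharpF F) s₀),
      HEq (_root_.cast (congrArg (valT M) hs₁) (valF F hF M c' s₁) e)
        (c' s₀.1 s₀.2.1 s₀.2.2 (eltsInv F hF s₀.2.2 e)) := by
    intro s₁ hs₁
    obtain rfl : s₁ = s₀ := hinj hs₁
    refine (cast_heq _ _).trans ?_
    exact HEq.rfl

  unfold cLift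
  rw [dif_pos hc]
  exact key hc.choose hc.choose_spec

theorem PthEtaCons {C : Type u} [Category.{u} C] {m : ℕ} {X Z : C}
    (r : Pth C (m + 1) X Z) :
    ∃ (Y : C) (f : X ⟶ Y) (p : Pth C m Y Z), r = Pth.cons f p :=
  match r with | .cons f p => ⟨_, f, p, rfl⟩

theorem eltsInv_cons (F : GradedFunctor k φ 𝔟 𝔞) (hF : F.Subcartesian)
    {m : ℕ} {X Y Z : Sh 𝔟} (f : X ⟶ Y) (p : Pth (Sh 𝔟) m Y Z)
    (x : 𝔞.Hom (φ.map (Sh.base f)) (F.obj X.2) (F.obj Y.2))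
    (e : PthElts 𝔞 (p.map (sharpF F))) :
    eltsInv F hF (Pth.cons f p)
        (PthElts.cons x e : PthElts 𝔞 ((Pth.cons f p).map (sharpF F))) =
      PthElts.cons (Finv F hF (Sh.base f) x) (eltsInv F hF p e) :=
  rfl

/-- The key inductive transfer of multilinearity along a subcartesian graded
functor whose nerve map is injective on objects. -/
theorem genML (F : GradedFunctor k φ 𝔟 𝔞) (hF : F.Subcartesian) (M : Bimod k 𝔞)
    (hobj : ∀ V V' : Sh 𝔟, (sharpF F).obj V = (sharpF F).obj V' → V = V') :
    ∀ (m : ℕ) {W' : 𝒱} (B' : 𝔟.Obj W') (V : Sh 𝔟) (v' : W' ⟶ V.1)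
      (v : φ.obj W' ⟶ ((sharpF F).obj V).1) (hv : v = φ.map v')
      (ξ : ∀ (Z₀ : Sh 𝔟) (q₀ : Pth (Sh 𝔟) m V Z₀), PthElts 𝔟 q₀ →
        (Bimod.pullback F M).M (v' ≫ Sh.base q₀.comp) B' Z₀.2)
      (hξ : IsML (Bimod.pullback F M) ξ)
      (χ : ∀ (Z : Sh 𝔞) (q : Pth (Sh 𝔞) m ((sharpF F).obj V) Z), PthElts 𝔞 q →
        M.M (v ≫ Sh.base q.comp) (F.obj B') Z.2)
      (hP : ∀ (Z₀ : Sh 𝔟) (q₀ : Pth (Sh 𝔟) m V Z₀)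
          (e : PthElts 𝔞 (q₀.map (sharpF F))),
        χ ((sharpF F).obj Z₀) (q₀.map (sharpF F)) e =
          M.cst (by rw [hv, Pth.comp_map, φ.map_comp]; rfl)
            (ξ Z₀ q₀ (eltsInv F hF q₀ e)))
      (hN : ∀ (Z : Sh 𝔞) (q : Pth (Sh 𝔞) m ((sharpF F).obj V) Z)
          (e : PthElts 𝔞 q),
        (¬ ∃ (Z₀ : Sh 𝔟) (q₀ : Pth (Sh 𝔟) m V Z₀)
          (_ : (sharpF F).obj Z₀ = Z), HEq (q₀.map (sharpF F)) q) →
          χ Z q e = 0),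
      IsML M χ := by
  intro m
  induction m with
  | zero => intro _ _ _ _ _ _ _ _ _ _ _; trivial
  | succ m ih =>
    intro W' B' V v' v hv ξ hξ χ hP hN
    refine ⟨?_, ?_, ?_⟩
    · -- additivity in the first slot
      intro Y' Z a q e x x'
      by_cases hl : ∃ (Z₀ : Sh 𝔟) (q₀ : Pth (Sh 𝔟) (m + 1) V Z₀)
          (_ : (sharpF F).obj Z₀ = Z), HEq (q₀.map (sharpF F)) (Pth.cons a q)
      · obtain ⟨Z₀, q₀, hZ, hq⟩ := hl
        subst hZ
        obtain ⟨V', a₀, q₀', rfl⟩ := PthEtaCons q₀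
        have hq' := eq_of_heq hq
        injection hq' with h1 h2 hY h4 hf hp
        subst hY
        obtain rfl := eq_of_heq hf
        obtain rfl := eq_of_heq hp
        refine (hP Z₀ (.cons a₀ q₀') (.cons (x + x') e)).trans ?_
        refine Eq.trans ?_ (congrArg₂ (· + ·)
          (hP Z₀ (.cons a₀ q₀') (.cons x e))
          (hP Z₀ (.cons a₀ q₀') (.cons x' e))).symm
        erw [eltsInv_cons, eltsInv_cons, eltsInv_cons, Finv_add,
          hξ.1 V' Z₀ a₀ q₀' (eltsInv F hF q₀' e) _ _, M.cst_add]
        exact rfl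
      · rw [hN _ (.cons a q) (.cons (x + x') e) hl,
          hN _ (.cons a q) (.cons x e) hl, hN _ (.cons a q) (.cons x' e) hl,
          add_zero]
    · -- homogeneity in the first slot
      intro Y' Z a q e r x
      by_cases hl : ∃ (Z₀ : Sh 𝔟) (q₀ : Pth (Sh 𝔟) (m + 1) V Z₀)
          (_ : (sharpF F).obj Z₀ = Z), HEq (q₀.map (sharpF F)) (Pth.cons a q)
      · obtain ⟨Z₀, q₀, hZ, hq⟩ := hl
        subst hZ
        obtain ⟨V', a₀, q₀', rfl⟩ := PthEtaCons q₀
        have hq' := eq_of_heq hq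
        injection hq' with h1 h2 hY h4 hf hp
        subst hY
        obtain rfl := eq_of_heq hf
        obtain rfl := eq_of_heq hp
        refine (hP Z₀ (.cons a₀ q₀') (.cons (r • x) e)).trans ?_
        refine Eq.trans ?_
          (congrArg (r • ·) (hP Z₀ (.cons a₀ q₀') (.cons x e))).symm
        erw [eltsInv_cons, eltsInv_cons, Finv_smul,
          hξ.2.1 V' Z₀ a₀ q₀' (eltsInv F hF q₀' e) r _, M.cst_smul]
        exact rfl
      · rw [hN _ (.cons a q) (.cons (r • x) e) hl,
          hN _ (.cons a q) (.cons x e) hl, smul_zero]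
    · -- partial evaluations
      intro Y' a x
      by_cases hl : ∃ (V' : Sh 𝔟) (a₀ : V ⟶ V')
          (_ : (sharpF F).obj V' = Y'), HEq ((sharpF F).map a₀) a
      · obtain ⟨V', a₀, hY, ha⟩ := hl
        subst hY
        obtain rfl := eq_of_heq ha
        refine ih B' V' (v' ≫ Sh.base a₀) (v ≫ Sh.base ((sharpF F).map a₀))
          (by rw [hv, φ.map_comp]; rfl) _
          (hξ.2.2 V' a₀ (Finv F hF (Sh.base a₀) x)) _ ?_ ?_
        · intro Z₀ q₀ e
          refine eq_of_heq (((M.cst_heq _ _).trans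
            ((heq_of_eq (hP Z₀ (.cons a₀ q₀) (.cons x e))).trans
              (M.cst_heq _ _))).trans
            ((M.cst_heq _ _).trans ((Bimod.pullback F M).cst_heq _ _)).symm)
        · intro Z q e hno
          have h0 : χ Z (Pth.cons ((sharpF F).map a₀) q) (PthElts.cons x e)
              = 0 := by
            refine hN _ _ _ ?_
            rintro ⟨Z₀, r, hZ, hr⟩
            subst hZ
            obtain ⟨V₁, b₀, q₀, rfl⟩ := PthEtaCons r
            have hr' := eq_of_heq hr
            injection hr' with h1 h2 hY h4 hf hp
            obtain rfl := hobj V₁ V' hY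
            exact hno ⟨Z₀, q₀, rfl, hp⟩
          rw [h0]; exact M.cst_zero _
      · refine IsML_zero M _ (fun Z q e => ?_)
        have h0 : χ Z (Pth.cons a q) (PthElts.cons x e) = 0 := by
          refine hN _ (.cons a q) (.cons x e) ?_
          rintro ⟨Z₀, r, hZ, hr⟩
          subst hZ
          obtain ⟨V₁, b₀, q₀, rfl⟩ := PthEtaCons r
          have hr' := eq_of_heq hr
          injection hr' with h1 h2 hY h4 hf hp
          exact hl ⟨V₁, b₀, hY, hf⟩
        rw [h0]; exact M.cst_zero _

end Aux


/-- Let `(φ, F) : (𝒱, 𝔟) → (𝒰, 𝔞)` be a subcartesian graded functor, `M` an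
`𝔞`-bimodule and `n ∈ ℕ`.  Call `(φ, F)` `n`-injective (resp. `n`-surjective) if the
induced maps `𝒩ₖ(F) : 𝒩ₖ(𝔟) → 𝒩ₖ(𝔞)` on `k`-simplices of the nerves are injective
(resp. surjective) for all `k ≤ n`.  Then:
(1) if `(φ, F)` is `n`-injective, `(F*)ⁿ : Cⁿ_𝒰(𝔞, M) → Cⁿ_𝒱(𝔟, F*M)` is surjective;
(2) if `(φ, F)` is `n`-surjective, `(F*)ⁿ` is injective. -/
theorem statement13 {k : Type u} [CommRing k] {𝒱 𝒰 : Type u} [Category.{u} 𝒱]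
    [Category.{u} 𝒰] {φ : 𝒱 ⥤ 𝒰} {𝔟 : GradedCat k 𝒱} {𝔞 : GradedCat k 𝒰}
    (F : GradedFunctor k φ 𝔟 𝔞) (hF : F.Subcartesian) (M : Bimod k 𝔞) (n : ℕ) :
    ((∀ m ≤ n, Function.Injective
        (fun s : NerveTot (Sh 𝔟) m => NerveTot.map (sharpF F) s)) →
      ∀ c' : RawCochain (Bimod.pullback F M) n, IsCochain (Bimod.pullback F M) c' →
        ∃ c : RawCochain M n, IsCochain M c ∧ Fstar F M c = c') ∧
    ((∀ m ≤ n, Function.Surjective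
        (fun s : NerveTot (Sh 𝔟) m => NerveTot.map (sharpF F) s)) →
      ∀ c c' : RawCochain M n, IsCochain M c → IsCochain M c' →
        Fstar F M c = Fstar F M c' → c = c') := by
  constructor
  · -- surjectivity of (F*)ⁿ
    intro hinj c' hc'
    have hobj : ∀ V V' : Sh 𝔟, (sharpF F).obj V = (sharpF F).obj V' → V = V' := by
      intro V V' h
      have h2 := hinj 0 (Nat.zero_le _)
        (a₁ := ⟨V, V, Pth.nil V⟩) (a₂ := ⟨V', V', Pth.nil V'⟩)
        (congrArg (fun U : Sh 𝔞 => (⟨U, U, Pth.nil U⟩ : NerveTot (Sh 𝔞) 0)) h)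
      exact congrArg Sigma.fst h2
    refine ⟨cLift F hF M c', ?_, ?_⟩
    · -- multilinearity of the lift
      intro X
      by_cases hX : ∃ X₀ : Sh 𝔟, (sharpF F).obj X₀ = X
      · obtain ⟨X₀, rfl⟩ := hX
        refine genML F hF M hobj n X₀.2 X₀ (𝟙 X₀.1) (𝟙 _) (φ.map_id _).symm
          (toRel (Bimod.pullback F M) c' X₀) (hc' X₀)
          (toRel M (cLift F hF M c') ((sharpF F).obj X₀)) ?_ ?_
        · intro Z₀ q₀ e
          refine eq_of_heq (((M.cst_heq _ _).trans
            (cLift_heq F hF M c' (hinj n le_rfl) ⟨X₀, Z₀, q₀⟩ e)).trans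
            ((M.cst_heq _ _).trans
              ((Bimod.pullback F M).cst_heq _ _)).symm)
        · intro Z q e hno
          have h0 : cLift F hF M c' ((sharpF F).obj X₀) Z q e = 0 := by
            refine cLift_zero F hF M c' _ _ _ _ ?_
            rintro ⟨⟨V₁, Z₀, q₀⟩, hs⟩
            have h1 : (sharpF F).obj V₁ = (sharpF F).obj X₀ :=
              congrArg Sigma.fst hs
            obtain rfl := hobj V₁ X₀ h1
            obtain ⟨-, h2, h3⟩ := nerveTotEqElim hs
            exact hno ⟨Z₀, q₀, h2, h3⟩
          show M.cst _ _ = 0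
          rw [h0]; exact M.cst_zero _
      · refine IsML_zero M _ (fun Z q e => ?_)
        have h0 : cLift F hF M c' X Z q e = 0 := by
          refine cLift_zero F hF M c' _ _ _ _ ?_
          rintro ⟨⟨V₁, Z₀, q₀⟩, hs⟩
          exact hX ⟨V₁, congrArg Sigma.fst hs⟩
        show M.cst _ _ = 0
        rw [h0]; exact M.cst_zero _
    · -- (F*)ⁿ of the lift is c'
      funext X₀ Y₀ q e₀
      refine eq_of_heq (((M.cst_heq _ _).trans
        (cLift_heq F hF M c' (hinj n le_rfl) ⟨X₀, Y₀, q⟩ (eltsMap F e₀))).trans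
        (heq_of_eq (congrArg (c' X₀ Y₀ q) (eltsInv_eltsMap F hF q e₀))))
  · -- injectivity of (F*)ⁿ
    intro hsurj c c' _hc _hc' heq
    funext X Y p e
    obtain ⟨⟨X₀, Y₀, q⟩, hs⟩ := hsurj n le_rfl ⟨X, Y, p⟩
    obtain ⟨h1, h2, h3⟩ := nerveTotEqElim hs
    obtain rfl : (sharpF F).obj X₀ = X := h1
    obtain rfl : (sharpF F).obj Y₀ = Y := h2
    have h3' : HEq (q.map (sharpF F)) p := h3
    obtain rfl := eq_of_heq h3' 
    have h1 := congrFun (congrFun (congrFun (congrFun heq X₀) Y₀) q)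
      (eltsInv F hF q e)
    simp only [Fstar] at h1
    have h2 := M.cst_inj _ h1
    rw [eltsMap_eltsInv F hF q e] at h2
    exact h2

end MapGr
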